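/- Let G be a definition for a set Q ⊆ σ of atoms and let I be an interpretation satisfying G. Then for any subset K of I with K \ Q = I \ Q, K satisfies the reduct G^I if and only if K satisfies G. -/
import Mathlib


/-- Infinitary propositional formulas over signature `σ`:
atoms, conjunctions and disjunctions of (index-)sets of formulas, implication. -/
inductive Formula (σ : Type) : Type 1
  | atom : σ → Formula σ
  | conj : (ι : Type) → (ι → Formula σ) → Formula σ
  | disj : (ι : Type) → (ι → Formula σ) → Formula σ
  | imp : Formula σ → Formula σ → Formula σ

namespace Formula

variable {σ : Type}

/-- `⊥` is the empty disjunction. -/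
def bot : Formula σ := Formula.disj Empty (fun e => e.elim)

/-- Binary conjunction `F ∧ G`. -/
def and (F G : Formula σ) : Formula σ := Formula.conj Bool (fun b => if b then F else G)

/-- Binary disjunction `F ∨ G`. -/
def or (F G : Formula σ) : Formula σ := Formula.disj Bool (fun b => if b then F else G)

/-- Negation `¬F` abbreviates `F → ⊥`. -/
def neg (F : Formula σ) : Formula σ := Formula.imp F bot

/-- Conjunction of a set of atoms. -/
def conjAtoms (S : Set σ) : Formula σ := Formula.conj S (fun p => Formula.atom p.val)

/-- Satisfaction of an infinitary formula by an interpretation `I ⊆ σ`. -/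
def Sat (I : Set σ) : Formula σ → Prop
  | .atom p => p ∈ I
  | .conj _ f => ∀ i, Sat I (f i)
  | .disj _ f => ∃ i, Sat I (f i)
  | .imp F G => Sat I F → Sat I G

open Classical in
/-- The reduct `F^I`. -/
noncomputable def reduct (I : Set σ) : Formula σ → Formula σ
  | .atom p => if p ∈ I then Formula.atom p else bot
  | .conj ι f => Formula.conj ι (fun i => reduct I (f i))
  | .disj ι f => Formula.disj ι (fun i => reduct I (f i))
  | .imp F G => if Sat I (Formula.imp F G) then Formula.imp (reduct I F) (reduct I G) else bot

/-- `I` is an `A`-stable model of `F`: `I` is minimal w.r.t. `≤_A`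
(`J ≤_A I` iff `J ⊆ I` and `I \ J ⊆ A`) among interpretations satisfying `F^I`. -/
def AStable (A : Set σ) (I : Set σ) (F : Formula σ) : Prop :=
  Sat I (reduct I F) ∧ ∀ J : Set σ, J ⊆ I → I \ J ⊆ A → Sat J (reduct I F) → J = I

/-- A stable model is a `σ`-stable model. -/
def Stable (I : Set σ) (F : Formula σ) : Prop := AStable Set.univ I F

/-- The strictly positive atoms `P(F)`. -/
def spos : Formula σ → Set σ
  | .atom p => {p}
  | .conj _ f => ⋃ i, spos (f i)
  | .disj _ f => ⋃ i, spos (f i)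
  | .imp _ H => spos H

/-- `F` is (syntactically) the formula `⊥`, i.e. an empty disjunction. -/
def IsBot : Formula σ → Prop
  | .disj ι _ => IsEmpty ι
  | _ => False

open Classical in
mutual
/-- Positive nonnegated atoms `Pnn(F)`. -/
noncomputable def pnn : Formula σ → Set σ
  | .atom p => {p}
  | .conj _ f => ⋃ i, pnn (f i)
  | .disj _ f => ⋃ i, pnn (f i)
  | .imp G H => if IsBot H then ∅ else nnn G ∪ pnn H

/-- Negative nonnegated atoms `Nnn(F)`. -/
noncomputable def nnn : Formula σ → Set σ
  | .atom _ => ∅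
  | .conj _ f => ⋃ i, nnn (f i)
  | .disj _ f => ⋃ i, nnn (f i)
  | .imp G H => if IsBot H then ∅ else pnn G ∪ nnn H
end

/-- The rules of a formula, as antecedent/consequent pairs. -/
def rules : Formula σ → Set (Formula σ × Formula σ)
  | .atom _ => ∅
  | .conj _ f => ⋃ i, rules (f i)
  | .disj _ f => ⋃ i, rules (f i)
  | .imp G H => insert (G, H) (rules H)

/-- Edge relation of the positive dependency graph `DG_A[F]` (vertex set `A`). -/
noncomputable def DGEdge (F : Formula σ) (A : Set σ) (p q : σ) : Prop :=
  p ∈ A ∧ q ∈ A ∧ ∃ R ∈ rules F, p ∈ spos R.2 ∧ q ∈ pnn R.1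

/-- The atoms occurring in a formula. -/
def atoms : Formula σ → Set σ
  | .atom p => {p}
  | .conj _ f => ⋃ i, atoms (f i)
  | .disj _ f => ⋃ i, atoms (f i)
  | .imp G H => atoms G ∪ atoms H

/-- `G` is a definition for the set `Q` of atoms: a conjunction of formulas
`H ∧ C^∧ → q` with `q ∈ Q`, `C ⊆ Q`, and no atom of `Q` occurring in `H`. -/
def IsDefinition (Q : Set σ) (G : Formula σ) : Prop :=
  ∃ (ι : Type) (g : ι → Formula σ), G = Formula.conj ι g ∧
    ∀ i, ∃ (H : Formula σ) (C : Set σ) (q : σ),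
      q ∈ Q ∧ C ⊆ Q ∧ (∀ p ∈ Q, p ∉ atoms H) ∧
      g i = Formula.imp (Formula.and H (conjAtoms C)) (Formula.atom q)

end Formula

section Graph

variable {V : Type*}

/-- An infinite walk in the directed graph with edge relation `E`. -/
def IsInfWalk (E : V → V → Prop) (w : ℕ → V) : Prop := ∀ i, E (w i) (w (i + 1))

/-- The partition `{P₁, P₂}` is infinitely separable: every infinite walk
visits `P₁` or `P₂` only finitely often. -/
def InfSeparable (E : V → V → Prop) (P1 P2 : Set V) : Prop :=
  ∀ w : ℕ → V, IsInfWalk E w → {i | w i ∈ P1}.Finite ∨ {i | w i ∈ P2}.Finite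

/-- `u` and `v` are in the same strongly connected component:
each is reachable from the other. -/
def SameSCC (E : V → V → Prop) (u v : V) : Prop :=
  Relation.ReflTransGen E u v ∧ Relation.ReflTransGen E v u

/-- The partition `{P₁, P₂}` is separable: every strongly connected
component is contained in `P₁` or in `P₂`. -/
def Separable (E : V → V → Prop) (P1 P2 : Set V) : Prop :=
  ∀ u v, SameSCC E u v → ((u ∈ P1 ∧ v ∈ P1) ∨ (u ∈ P2 ∧ v ∈ P2))

end Graph

namespace Formula

variable {σ : Type}

lemma not_sat_bot {K : Set σ} : ¬ Sat K (bot : Formula σ) := by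
  rintro ⟨e, _⟩; exact e.elim

lemma reduct_imp_of_sat {I : Set σ} {F G : Formula σ} (h : Sat I (Formula.imp F G)) :
    reduct I (Formula.imp F G) = Formula.imp (reduct I F) (reduct I G) := by
  simp only [reduct, if_pos h]

lemma reduct_imp_of_not_sat {I : Set σ} {F G : Formula σ} (h : ¬ Sat I (Formula.imp F G)) :
    reduct I (Formula.imp F G) = bot := by
  simp only [reduct, if_neg h]

lemma sat_agree {K I : Set σ} (F : Formula σ)
    (h : ∀ p ∈ F.atoms, (p ∈ K ↔ p ∈ I)) : Sat K F ↔ Sat I F := by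
  induction F with
  | atom p => exact h p rfl
  | conj ι f ih =>
      simp only [Sat]
      exact forall_congr' fun i => ih i fun p hp => h p (Set.mem_iUnion.2 ⟨i, hp⟩)
  | disj ι f ih =>
      simp only [Sat]
      exact exists_congr fun i => ih i fun p hp => h p (Set.mem_iUnion.2 ⟨i, hp⟩)
  | imp F G ihF ihG =>
      simp only [Sat]
      exact imp_congr (ihF fun p hp => h p (Or.inl hp)) (ihG fun p hp => h p (Or.inr hp))

lemma sat_reduct_agree {K I : Set σ} (F : Formula σ)
    (h : ∀ p ∈ F.atoms, (p ∈ K ↔ p ∈ I)) : Sat K (reduct I F) ↔ Sat I F := by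
  induction F with
  | atom p =>
      simp only [reduct]
      by_cases hp : p ∈ I
      · simp only [if_pos hp, Sat, hp, iff_true]
        exact (h p rfl).2 hp
      · simp only [if_neg hp, Sat, hp, iff_false]
        exact not_sat_bot
  | conj ι f ih =>
      simp only [reduct, Sat]
      exact forall_congr' fun i => ih i fun p hp => h p (Set.mem_iUnion.2 ⟨i, hp⟩)
  | disj ι f ih =>
      simp only [reduct, Sat]
      exact exists_congr fun i => ih i fun p hp => h p (Set.mem_iUnion.2 ⟨i, hp⟩)
  | imp F G ihF ihG =>
      by_cases hFG : Sat I (Formula.imp F G)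
      · rw [reduct_imp_of_sat hFG]
        simp only [Sat]
        rw [ihF fun p hp => h p (Or.inl hp), ihG fun p hp => h p (Or.inr hp)]
      · rw [reduct_imp_of_not_sat hFG]
        exact iff_of_false not_sat_bot hFG

lemma sat_and {K : Set σ} {F G : Formula σ} :
    Sat K (Formula.and F G) ↔ Sat K F ∧ Sat K G := by
  constructor
  · intro hs; exact ⟨hs true, hs false⟩
  · rintro ⟨h1, h2⟩ b; cases b <;> simpa

lemma sat_conjAtoms {K : Set σ} {C : Set σ} :
    Sat K (conjAtoms C) ↔ C ⊆ K := by
  constructor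
  · intro hs p hp; exact hs ⟨p, hp⟩
  · intro hC p; exact hC p.2

lemma sat_reduct_atom {K I : Set σ} {p : σ} :
    Sat K (reduct I (Formula.atom p)) ↔ p ∈ I ∧ p ∈ K := by
  simp only [reduct]
  by_cases hp : p ∈ I
  · simp [if_pos hp, Sat, hp]
  · simp only [if_neg hp]
    exact iff_of_false not_sat_bot (fun h => hp h.1)

lemma sat_reduct_and {K I : Set σ} {F G : Formula σ} :
    Sat K (reduct I (Formula.and F G)) ↔ Sat K (reduct I F) ∧ Sat K (reduct I G) := by
  constructor
  · intro hs
    refine ⟨?_, ?_⟩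
    · have := hs true; simpa using this
    · have := hs false; simpa using this
  · rintro ⟨h1, h2⟩ b; cases b <;> simpa

lemma sat_reduct_conjAtoms {K I : Set σ} {C : Set σ} :
    Sat K (reduct I (conjAtoms C)) ↔ ∀ p ∈ C, p ∈ I ∧ p ∈ K := by
  constructor
  · intro hs p hp; exact sat_reduct_atom.1 (hs ⟨p, hp⟩)
  · intro hC p; exact sat_reduct_atom.2 (hC p.1 p.2)

end Formula

/-- if `G` is a definition for `Q`, `I ⊨ G`, `K ⊆ I` and
`K \ Q = I \ Q`, then `K ⊨ G^I` iff `K ⊨ G`. -/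
theorem sat_reduct_iff_sat_of_definition {σ : Type} (Q : Set σ) (G : Formula σ)
    (hdef : Formula.IsDefinition Q G) (I : Set σ) (hI : Formula.Sat I G)
    (K : Set σ) (hKI : K ⊆ I) (hKQ : K \ Q = I \ Q) :
    Formula.Sat K (Formula.reduct I G) ↔ Formula.Sat K G := by
  obtain ⟨ι, g, rfl, hg⟩ := hdef
  have hagree : ∀ p, p ∉ Q → (p ∈ K ↔ p ∈ I) := by
    intro p hpQ
    constructor
    · exact fun h => hKI h
    · intro h
      have : p ∈ I \ Q := ⟨h, hpQ⟩
      rw [← hKQ] at this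
      exact this.1
  simp only [Formula.reduct, Formula.Sat]
  refine forall_congr' fun i => ?_
  obtain ⟨H, C, q, hq, hCQ, hH, hgi⟩ := hg i
  have hIi : Formula.Sat I (g i) := hI i
  rw [hgi] at hIi ⊢
  have hHag : ∀ p ∈ H.atoms, (p ∈ K ↔ p ∈ I) := fun p hp =>
    hagree p (fun hpQ => hH p hpQ hp)
  have hredH : Formula.Sat K (Formula.reduct I H) ↔ Formula.Sat I H :=
    Formula.sat_reduct_agree H hHag
  have hKH : Formula.Sat K H ↔ Formula.Sat I H := Formula.sat_agree H hHag
  rw [Formula.reduct_imp_of_sat hIi]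
  show Formula.Sat K (Formula.reduct I (H.and (Formula.conjAtoms C))) →
      Formula.Sat K (Formula.reduct I (Formula.atom q)) ↔
      (Formula.Sat K (H.and (Formula.conjAtoms C)) → Formula.Sat K (Formula.atom q))
  rw [Formula.sat_reduct_and, Formula.sat_reduct_conjAtoms, Formula.sat_reduct_atom,
    Formula.sat_and, Formula.sat_conjAtoms, hredH, hKH]
  constructor
  · intro h hyp
    exact (h ⟨hyp.1, fun p hp => ⟨hKI (hyp.2 hp), hyp.2 hp⟩⟩).2
  · intro h hyp
    have hqK : q ∈ K := h ⟨hyp.1, fun p hp => (hyp.2 p hp).2⟩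
    exact ⟨hKI hqK, hqK⟩
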